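/- arXiv:2011.13103 — 2 statements merged into one kernel-verified Lean document; each statement's English description precedes it below -/
import Mathlib

section
/- Let F : Δ_{2^m} × Δ_{2^n} → Δ_{2^s} have algebraic form M_F u x and let c ∈ Δ_{2^s}. Define the truth matrix T ∈ B_{2^m × 2^n} by T_{i,j} = 1 iff M_F δ_{2^m}^i δ_{2^n}^j = c. Then a state feedback u = M_G x with M_G ∈ L_{2^m × 2^n} is an antecedence solution (i.e., M_F (M_G x) x = c for all x ∈ Δ_{2^n}) if and only if M_G ≤ T entrywise. -/
open Matrix Kronecker

noncomputable section

/-- Row-major pairing `(i, j) ↦ N * i + j`, matching the standard Kronecker convention. -/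
def kronEquiv (M N : ℕ) : Fin M × Fin N ≃ Fin (M * N) := finProdFinEquiv

/-- Kronecker product of two (column) vectors. -/
def vecKron {M N : ℕ} (u : Fin M → ℝ) (x : Fin N → ℝ) : Fin (M * N) → ℝ :=
  fun k => u ((kronEquiv M N).symm k).1 * x ((kronEquiv M N).symm k).2

/-- `δ_N^i` (0-indexed): the `i`-th column of the identity matrix `I_N`. -/
def eVec (N : ℕ) (i : Fin N) : Fin N → ℝ := fun j => if j = i then 1 else 0

/-- The set `Δ_N` of columns of the identity matrix. -/
def deltaSet (N : ℕ) : Set (Fin N → ℝ) := {x | ∃ i, x = eVec N i}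

/-- A matrix is logical if every column is a standard basis vector. -/
def IsLogical {m n : ℕ} (L : Matrix (Fin m) (Fin n) ℝ) : Prop :=
  ∀ j, ∃ i, (fun k => L k j) = eVec m i

/-- The power-reducing matrix `PR_k = diag(δ_k^1, …, δ_k^k)`: column `j` is `δ_k^j ⊗ δ_k^j`. -/
def PRmat (k : ℕ) : Matrix (Fin (k * k)) (Fin k) ℝ :=
  Matrix.of fun i j => vecKron (eVec k j) (eVec k j) i

lemma stp_dim (n p : ℕ) : p * (Nat.lcm n p / p) = n * (Nat.lcm n p / n) := by
  rw [Nat.mul_div_cancel' (Nat.dvd_lcm_right n p), Nat.mul_div_cancel' (Nat.dvd_lcm_left n p)]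

/-- The semi-tensor product `A ⋉ B = (A ⊗ I_{t/n})(B ⊗ I_{t/p})`, `t = lcm(n,p)`. -/
def stp {m n p q : ℕ} (A : Matrix (Fin m) (Fin n) ℝ) (B : Matrix (Fin p) (Fin q) ℝ) :
    Matrix (Fin (m * (Nat.lcm n p / n))) (Fin (q * (Nat.lcm n p / p))) ℝ :=
  (Matrix.reindex (kronEquiv m _) (kronEquiv n _)
      (A ⊗ₖ (1 : Matrix (Fin (Nat.lcm n p / n)) (Fin (Nat.lcm n p / n)) ℝ))) *
  (Matrix.reindex ((kronEquiv p _).trans (finCongr (stp_dim n p))) (kronEquiv q _)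
      (B ⊗ₖ (1 : Matrix (Fin (Nat.lcm n p / p)) (Fin (Nat.lcm n p / p)) ℝ)))


lemma mulVec_eVec {M N : ℕ} (A : Matrix (Fin M) (Fin N) ℝ) (j : Fin N) :
    A.mulVec (eVec N j) = fun i => A i j := by
  funext i
  simp [Matrix.mulVec, dotProduct, eVec]

/-- `u = M_G x` is an antecedence solution of `M_F u x = c`
iff `M_G ≤ T` entrywise, where `T` is the truth matrix. -/
theorem antecedence_iff (m n s : ℕ)
    (MF : Matrix (Fin (2 ^ s)) (Fin (2 ^ m * 2 ^ n)) ℝ) (hMF : IsLogical MF)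
    (c : Fin (2 ^ s) → ℝ) (hc : c ∈ deltaSet (2 ^ s))
    (T : Matrix (Fin (2 ^ m)) (Fin (2 ^ n)) ℝ)
    (hT : ∀ i j, T i j =
      if MF.mulVec (vecKron (eVec (2 ^ m) i) (eVec (2 ^ n) j)) = c then 1 else 0)
    (MG : Matrix (Fin (2 ^ m)) (Fin (2 ^ n)) ℝ) (hMG : IsLogical MG) :
    (∀ x ∈ deltaSet (2 ^ n), MF.mulVec (vecKron (MG.mulVec x) x) = c) ↔
      ∀ i j, MG i j ≤ T i j := by
  constructor
  · intro H i j
    obtain ⟨g, hg⟩ := hMG j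
    have hMGij : MG i j = eVec (2 ^ m) g i := congrFun hg i
    by_cases hig : i = g
    · subst hig
      have hx := H (eVec (2 ^ n) j) ⟨j, rfl⟩
      rw [mulVec_eVec MG j, hg] at hx
      rw [hT i j, if_pos hx, hMGij]
      simp [eVec]
    · rw [hMGij]
      simp only [eVec, if_neg hig]
      rw [hT i j]
      positivity
  · intro H x hx
    obtain ⟨j, rfl⟩ := hx
    obtain ⟨g, hg⟩ := hMG j
    rw [mulVec_eVec MG j, hg]
    have h1 : MG g j = 1 := by
      have := congrFun hg g; simpa [eVec] using this
    have := H g j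
    rw [h1, hT g j] at this
    by_contra hne
    rw [if_neg hne] at this
    linarith
end
end

section
/- Set-stabilization criterion: let M ⊆ Δ_{2^n}, W_0 the largest control invariant subset of M, and define W_{k+1} = { x : ∃ u, M_F u x ∈ W_0 ∪ ⋯ ∪ W_k }. Then the BCN is state-feedback stabilizable to M (there exist M_G and T with closed-loop trajectories in M for all t ≥ T from every initial state) if and only if W_0 ≠ ∅ and ⋃_k W_k = Δ_{2^n}. -/
open Matrix Kronecker

noncomputable section

lemma eVec_injective {N : ℕ} : Function.Injective (eVec N) := by
  intro i j h
  by_contra hne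
  have := congrFun h i
  simp [eVec, hne] at this

lemma vecKron_eVec {M N : ℕ} (i : Fin M) (j : Fin N) :
    vecKron (eVec M i) (eVec N j) = eVec (M * N) ((kronEquiv M N) (i, j)) := by
  funext k
  simp only [vecKron, eVec]
  by_cases h : k = (kronEquiv M N) (i, j)
  · subst h
    simp
  · have h2 : ((kronEquiv M N).symm k) ≠ (i, j) := by
      intro hc; exact h (by rw [← hc]; simp)
    rw [if_neg h]
    by_cases h3 : ((kronEquiv M N).symm k).1 = i
    · have h4 : ((kronEquiv M N).symm k).2 ≠ j := fun hc => h2 (Prod.ext h3 hc)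
      rw [if_pos h3, if_neg h4]; ring
    · rw [if_neg h3]; ring

lemma logical_mulVec_eVec {p q : ℕ} (L : Matrix (Fin p) (Fin q) ℝ) (hL : IsLogical L)
    (j : Fin q) : ∃ i, L.mulVec (eVec q j) = eVec p i := by
  obtain ⟨i, hi⟩ := hL j
  refine ⟨i, ?_⟩
  funext k
  have : L.mulVec (eVec q j) k = L k j := by
    simp [Matrix.mulVec, dotProduct, eVec]
  rw [this, ← congrFun hi k]


/-- set-stabilization criterion. The BCN is state-feedback
stabilizable to `M` iff the largest control invariant subset `W_0` of `M` is
nonempty and the iterated reachable-to sets exhaust `Δ_{2^n}`. -/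
theorem set_stabilization_criterion (m n : ℕ)
    (MF : Matrix (Fin (2 ^ n)) (Fin (2 ^ m * 2 ^ n)) ℝ) (hMF : IsLogical MF)
    (M : Set (Fin (2 ^ n) → ℝ)) (hM : M ⊆ deltaSet (2 ^ n))
    (W0 : Set (Fin (2 ^ n) → ℝ)) (hW0M : W0 ⊆ M)
    (hW0inv : ∀ x ∈ W0, ∃ u ∈ deltaSet (2 ^ m), MF.mulVec (vecKron u x) ∈ W0)
    (hW0max : ∀ S, S ⊆ M →
      (∀ x ∈ S, ∃ u ∈ deltaSet (2 ^ m), MF.mulVec (vecKron u x) ∈ S) → S ⊆ W0)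
    (W : ℕ → Set (Fin (2 ^ n) → ℝ)) (hW0' : W 0 = W0)
    (hWs : ∀ k, W (k + 1) = {x | x ∈ deltaSet (2 ^ n) ∧
      ∃ u ∈ deltaSet (2 ^ m),
        MF.mulVec (vecKron u x) ∈ ⋃ i ∈ Finset.range (k + 1), W i}) :
    (∃ MG : Matrix (Fin (2 ^ m)) (Fin (2 ^ n)) ℝ, IsLogical MG ∧
        ∃ T : ℕ, ∀ x ∈ deltaSet (2 ^ n), ∀ t ≥ T,
          (fun y => MF.mulVec (vecKron (MG.mulVec y) y))^[t] x ∈ M) ↔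
      (W0.Nonempty ∧ (⋃ k, W k) = deltaSet (2 ^ n)) := by
  classical
  have hstep : ∀ u ∈ deltaSet (2 ^ m), ∀ x ∈ deltaSet (2 ^ n),
      MF.mulVec (vecKron u x) ∈ deltaSet (2 ^ n) := by
    rintro u ⟨a, rfl⟩ x ⟨b, rfl⟩
    rw [vecKron_eVec]
    obtain ⟨i, hi⟩ := logical_mulVec_eVec MF hMF ((kronEquiv (2 ^ m) (2 ^ n)) (a, b))
    exact ⟨i, hi⟩
  have hWdelta : ∀ k, W k ⊆ deltaSet (2 ^ n) := by
    intro k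
    cases k with
    | zero => rw [hW0']; exact fun x hx => hM (hW0M hx)
    | succ k => rw [hWs]; exact fun x hx => hx.1
  constructor
  · rintro ⟨MG, hMG, T, hT⟩
    set φ : (Fin (2 ^ n) → ℝ) → (Fin (2 ^ n) → ℝ) :=
      fun y => MF.mulVec (vecKron (MG.mulVec y) y) with hφ
    have hφΔ : ∀ y ∈ deltaSet (2 ^ n), φ y ∈ deltaSet (2 ^ n) := by
      rintro y ⟨j, rfl⟩
      obtain ⟨i, hi⟩ := logical_mulVec_eVec MG hMG j
      exact hstep _ ⟨i, hi⟩ _ ⟨j, rfl⟩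
    set S : Set (Fin (2 ^ n) → ℝ) :=
      {y | ∃ t, T ≤ t ∧ ∃ x ∈ deltaSet (2 ^ n), φ^[t] x = y} with hS
    have hSM : S ⊆ M := by
      rintro y ⟨t, ht, x, hx, rfl⟩
      exact hT x hx t ht
    have hSinv : ∀ y ∈ S, ∃ u ∈ deltaSet (2 ^ m), MF.mulVec (vecKron u y) ∈ S := by
      intro y hy
      obtain ⟨j, hj⟩ := hM (hSM hy)
      obtain ⟨i, hi⟩ := logical_mulVec_eVec MG hMG j
      refine ⟨MG.mulVec y, ⟨i, by rw [hj]; exact hi⟩, ?_⟩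
      obtain ⟨t, ht, x, hx, hxy⟩ := hy
      exact ⟨t + 1, le_trans ht (Nat.le_succ t),
        x, hx, by rw [Function.iterate_succ_apply', hxy]⟩
    have hSW0 : S ⊆ W0 := hW0max S hSM hSinv
    have hpos : 0 < 2 ^ n := pow_pos (by norm_num) n
    constructor
    · exact ⟨φ^[T] (eVec (2 ^ n) ⟨0, hpos⟩),
        hSW0 ⟨T, le_refl T, eVec (2 ^ n) ⟨0, hpos⟩, ⟨_, rfl⟩, rfl⟩⟩
    · apply Set.Subset.antisymm
      · exact Set.iUnion_subset hWdelta
      · intro x hx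
        have hiter : ∀ s : ℕ, ∀ y ∈ deltaSet (2 ^ n), φ^[s] y ∈ W 0 → y ∈ W s := by
          intro s
          induction s with
          | zero => exact fun y _ h => h
          | succ s ih =>
            intro y hy h
            rw [hWs]
            obtain ⟨j, hj⟩ := hy
            obtain ⟨i, hi⟩ := logical_mulVec_eVec MG hMG j
            have h1 : φ y ∈ W s := by
              refine ih (φ y) (hφΔ y ⟨j, hj⟩) ?_
              rwa [← Function.iterate_succ_apply]
            exact ⟨⟨j, hj⟩, MG.mulVec y, ⟨i, by rw [hj]; exact hi⟩,
              Set.mem_biUnion (Finset.self_mem_range_succ s) h1⟩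
        have hxW : φ^[T] x ∈ W 0 := by
          rw [hW0']; exact hSW0 ⟨T, le_refl T, x, hx, rfl⟩
        exact Set.mem_iUnion.2 ⟨T, hiter T x hx hxW⟩
  · rintro ⟨hW0ne, hUnion⟩
    have hex : ∀ i : Fin (2 ^ n), ∃ k, eVec (2 ^ n) i ∈ W k := by
      intro i
      have : eVec (2 ^ n) i ∈ ⋃ k, W k := hUnion ▸ (⟨i, rfl⟩ : eVec (2 ^ n) i ∈ deltaSet (2 ^ n))
      exact Set.mem_iUnion.1 this
    set ρ : Fin (2 ^ n) → ℕ := fun i => Nat.find (hex i) with hρ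
    have hρ_spec : ∀ i, eVec (2 ^ n) i ∈ W (ρ i) := fun i => Nat.find_spec (hex i)
    have hgood : ∀ i : Fin (2 ^ n), ∃ u ∈ deltaSet (2 ^ m),
        ∃ j : Fin (2 ^ n), MF.mulVec (vecKron u (eVec (2 ^ n) i)) = eVec (2 ^ n) j ∧
          ((ρ i = 0 ∧ ρ j = 0) ∨ ρ j < ρ i) := by
      intro i
      rcases Nat.eq_zero_or_pos (ρ i) with h0 | hp
      · have hmem : eVec (2 ^ n) i ∈ W0 := by
          rw [← hW0']
          have := hρ_spec i
          rwa [h0] at this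
        obtain ⟨u, hu, hnext⟩ := hW0inv _ hmem
        obtain ⟨j, hj⟩ := hM (hW0M hnext)
        refine ⟨u, hu, j, hj, Or.inl ⟨h0, Nat.le_zero.1 (Nat.find_le ?_)⟩⟩
        rw [hW0']
        rwa [← hj]
      · obtain ⟨k, hk⟩ : ∃ k, ρ i = k + 1 :=
          ⟨ρ i - 1, (Nat.succ_pred_eq_of_pos hp).symm⟩
        have := hρ_spec i
        rw [hk, hWs] at this
        obtain ⟨_, u, hu, hnext⟩ := this
        obtain ⟨l, hl, hWl⟩ := Set.mem_iUnion₂.1 hnext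
        have hlk : l < k + 1 := Finset.mem_range.1 hl
        obtain ⟨j, hj⟩ := hWdelta l hWl
        refine ⟨u, hu, j, hj, Or.inr ?_⟩
        have : ρ j ≤ l := Nat.find_le (by rwa [← hj])
        omega
    choose u hu jnext hnext hrank using hgood
    set MG : Matrix (Fin (2 ^ m)) (Fin (2 ^ n)) ℝ := Matrix.of fun a b => u b a with hMGdef
    have hMGlog : IsLogical MG := by
      intro b
      obtain ⟨a, ha⟩ := hu b
      exact ⟨a, ha⟩
    have hMGcol : ∀ i, MG.mulVec (eVec (2 ^ n) i) = u i := by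
      intro i
      funext k
      simp [hMGdef, Matrix.mulVec, dotProduct, eVec, mul_ite, mul_one, mul_zero]
    have hφstep : ∀ i, MF.mulVec (vecKron (MG.mulVec (eVec (2 ^ n) i)) (eVec (2 ^ n) i))
        = eVec (2 ^ n) (jnext i) := by
      intro i
      rw [hMGcol]
      exact hnext i
    have key : ∀ t : ℕ, ∀ i, ρ i ≤ t →
        (fun y => MF.mulVec (vecKron (MG.mulVec y) y))^[t] (eVec (2 ^ n) i) ∈ W0 := by
      intro t
      induction t with
      | zero =>
        intro i h
        have h0 : ρ i = 0 := Nat.le_zero.1 h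
        have := hρ_spec i
        rw [h0, hW0'] at this
        exact this
      | succ t ih =>
        intro i h
        rw [Function.iterate_succ_apply, hφstep i]
        rcases hrank i with ⟨h0, hj0⟩ | hlt
        · exact ih _ (by omega)
        · exact ih _ (by omega)
    refine ⟨MG, hMGlog, Finset.univ.sup ρ, ?_⟩
    rintro x ⟨i, rfl⟩ t ht
    exact hW0M (key t i (le_trans (Finset.le_sup (Finset.mem_univ i)) ht))
end
end
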